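/- Let G be a group, let k ≥ 2 and n ≥ 1, let a : ZMod k → G be injective, let b : Fin (2n) → G be injective, let P be a pairing involution on (ZMod k) × Fin (2n), and suppose there is a finite set A ⊆ Fin (2n) with A.card = n giving a cyclic-bipartite structure: for every i : ZMod k and every x ∈ A, the partner P (i, x) has first coordinate i + 1 and second coordinate not in A. If a i * b j = a (P (i,j)).1 * b (P (i,j)).2 for every cell (i,j), then G contains a nontrivial element of finite order, i.e., there exists g ∈ G with g ≠ 1 and IsOfFinOrder g. -/

import Mathlib

/-- Generalization of the main theorem (Remark): if a group `G` contains distinct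
elements `a_i` (indexed cyclically by `ZMod k`, `k ≥ 2`) and distinct `b_j`
(`j : Fin (2n)`) satisfying the relations of a pairing involution admitting a
cyclic-bipartite structure, then `G` contains a nontrivial element of finite order. -/
theorem cyclic_bipartite_pairing_has_torsion
    {G : Type*} [Group G] (k n : ℕ) (hk : 2 ≤ k) (hn : 1 ≤ n)
    (a : ZMod k → G) (b : Fin (2 * n) → G)
    (ha : Function.Injective a) (hb : Function.Injective b)
    (P : ZMod k × Fin (2 * n) → ZMod k × Fin (2 * n))
    (hP_invol : ∀ p, P (P p) = p)
    (hP_nofix : ∀ p, P p ≠ p)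
    (hP_row : ∀ p, (P p).1 ≠ p.1)
    (hP_col : ∀ p, (P p).2 ≠ p.2)
    (A : Finset (Fin (2 * n))) (hA : A.card = n)
    (hbip : ∀ (i : ZMod k) (x : Fin (2 * n)), x ∈ A →
      (P (i, x)).1 = i + 1 ∧ (P (i, x)).2 ∉ A)
    (hrel : ∀ p : ZMod k × Fin (2 * n), a p.1 * b p.2 = a (P p).1 * b (P p).2) :
    ∃ g : G, g ≠ 1 ∧ IsOfFinOrder g := by
  classical
  haveI : Fact (1 < k) := ⟨hk⟩
  set c : ZMod k → G := fun i => (a (i + 1))⁻¹ * a i with hc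
  by_cases hconst : ∀ i, c i = c 0
  · -- all c i are equal; then c 0 has order dividing k
    have hpow : ∀ m : ℕ, (c 0) ^ m = (a ((m : ZMod k)))⁻¹ * a 0 := by
      intro m
      induction m with
      | zero => simp
      | succ m ih =>
        have hm : c ((m : ZMod k)) = c 0 := hconst _
        have : (c 0) ^ (m + 1) = c ((m : ZMod k)) * (c 0) ^ m := by
          rw [hm, pow_succ']
        rw [this, ih, hc]
        push_cast
        group
    refine ⟨c 0, ?_, ?_⟩
    · intro h1
      rw [hc] at h1
      simp only [] at h1
      have : a (0 + 1) = a 0 := inv_mul_eq_one.mp h1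
      have h01 : (0 + 1 : ZMod k) = 0 := ha this
      simp only [zero_add] at h01
      exact one_ne_zero h01
    · refine isOfFinOrder_iff_pow_eq_one.2 ⟨k, by omega, ?_⟩
      rw [hpow k, ZMod.natCast_self]
      simp
  · push_neg at hconst
    obtain ⟨i, hi⟩ := hconst
    set d : G := (c 0)⁻¹ * c i with hd
    -- surjectivity of partner map at each row
    have hcompl : ∀ (j : ZMod k) (y : Fin (2 * n)), y ∉ A →
        ∃ x ∈ A, P (j + 1, y) = (j, x) := by
      intro j y hy
      have hinj : Set.InjOn (fun x => (P (j, x)).2) A := by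
        intro x hx x' hx' h
        have h1 : P (j, x) = P (j, x') := by
          have e1 := (hbip j x hx).1
          have e2 := (hbip j x' hx').1
          exact Prod.ext (e1.trans e2.symm) h
        have h2 := congrArg P h1
        rw [hP_invol, hP_invol] at h2
        exact (Prod.ext_iff.1 h2).2
      set B := A.image (fun x => (P (j, x)).2) with hB
      have hBcard : B.card = n := by
        rw [hB, Finset.card_image_of_injOn hinj, hA]
      have hBsub : B ⊆ Aᶜ := by
        intro z hz
        obtain ⟨x, hx, rfl⟩ := Finset.mem_image.1 hz
        simpa using (hbip j x hx).2
      have hBeq : B = Aᶜ := by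
        refine Finset.eq_of_subset_of_card_le hBsub ?_
        rw [Finset.card_compl, hA, hBcard]
        simp only [Fintype.card_fin]
        omega
      have hyB : y ∈ B := by rw [hBeq]; simpa using hy
      obtain ⟨x, hx, hxe⟩ := Finset.mem_image.1 hyB
      refine ⟨x, hx, ?_⟩
      have hPx : P (j, x) = (j + 1, y) := Prod.ext (hbip j x hx).1 hxe
      rw [← hPx, hP_invol]
    -- the step map on A
    have step : ∀ x ∈ A, ∃ x' ∈ A, b x' = d * b x := by
      intro x hx
      obtain ⟨hy1, hy2⟩ := hbip i x hx
      set y := (P (i, x)).2 with hydef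
      have hby : b y = c i * b x := by
        have h := hrel (i, x)
        simp only at h
        rw [hy1] at h
        rw [hc]
        simp only
        rw [mul_assoc, h]
        group
        exact congrArg b hydef
      obtain ⟨x', hx', hPx'⟩ := hcompl 0 y hy2
      have h2 := hrel (0 + 1, y)
      rw [hPx'] at h2
      simp only at h2
      have hbx' : b x' = (c 0)⁻¹ * b y := by
        rw [hc]
        simp only
        have hx2 : b x' = (a 0)⁻¹ * (a (0 + 1) * b y) := by
          rw [h2]; group
        rw [hx2]; group
      refine ⟨x', hx', ?_⟩
      rw [hbx', hby, hd]
      group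
    have hAne : A.Nonempty := by
      rw [← Finset.card_pos, hA]; omega
    obtain ⟨x0, hx0⟩ := hAne
    -- iterate the step map
    choose f hfA hfb using step
    let g : {x // x ∈ A} → {x // x ∈ A} := fun x => ⟨f x.1 x.2, hfA x.1 x.2⟩
    let s : ℕ → {x // x ∈ A} := fun m => g^[m] ⟨x0, hx0⟩
    have hs : ∀ m : ℕ, b (s m).1 = d ^ m * b x0 := by
      intro m
      induction m with
      | zero => simp [s]
      | succ m ih =>
        have : s (m + 1) = g (s m) := by
          simp [s, Function.iterate_succ_apply']
        rw [this]
        show b (f (s m).1 (s m).2) = d ^ (m + 1) * b x0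
        rw [hfb (s m).1 (s m).2, ih, pow_succ']
        group
    obtain ⟨m, m', hne, hmm'⟩ := Finite.exists_ne_map_eq_of_infinite s
    have key : d ^ m = d ^ m' := by
      have h1 := hs m
      have h2 := hs m'
      rw [hmm'] at h1
      rw [h2] at h1
      exact (mul_right_cancel h1).symm
    have hdne : d ≠ 1 := by
      intro h
      rw [hd, inv_mul_eq_one] at h
      exact hi h.symm
    refine ⟨d, hdne, ?_⟩
    rcases hne.lt_or_gt with hlt | hlt
    · refine isOfFinOrder_iff_pow_eq_one.2 ⟨m' - m, by omega, ?_⟩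
      have hx : d ^ (m' - m) * d ^ m = d ^ m := by
        rw [← pow_add, Nat.sub_add_cancel hlt.le, ← key]
      exact mul_eq_right.mp hx
    · refine isOfFinOrder_iff_pow_eq_one.2 ⟨m - m', by omega, ?_⟩
      have hx : d ^ (m - m') * d ^ m' = d ^ m' := by
        rw [← pow_add, Nat.sub_add_cancel hlt.le, key]
      exact mul_eq_right.mp hx
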